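/- arXiv:2504.17861 — 2 statements merged into one kernel-verified Lean document; each statement's English description precedes it below -/
import Mathlib

section
/- Let C ∈ ℝ^{n×n×n₃} be T-symmetric positive definite and D ∈ ℝ^{n×l×n₃}, and set f(Y) = (1/2) Yᵀ⋆C⋆Y − Yᵀ⋆D for Y ∈ ℝ^{n×l×n₃}. Then X ∈ ℝ^{n×l×n₃} satisfies C⋆X = D if and only if Tr((f(X))^{(1)}) = min over all Y ∈ ℝ^{n×l×n₃} of Tr((f(Y))^{(1)}). -/
open Matrix Filter Topology

noncomputable section

/-- A third-order real tensor of size `n₁ × n₂ × n₃`, identified with the family of its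
frontal slices indexed by `ZMod n₃`. -/
abbrev Tensor (n₁ n₂ n₃ : ℕ) := ZMod n₃ → Matrix (Fin n₁) (Fin n₂) ℝ

/-- The T-product of third-order tensors: `(C ⋆ D)(k) = ∑ j, C (k - j) * D j`. -/
def tProd {n₁ n₂ l n₃ : ℕ} [NeZero n₃] (C : Tensor n₁ n₂ n₃) (D : Tensor n₂ l n₃) :
    Tensor n₁ l n₃ :=
  fun k => ∑ j : ZMod n₃, C (k - j) * D j

/-- The tensor transpose: `(Cᵀ)(k) = (C (-k))ᵀ`. -/
def tTrans {n₁ n₂ n₃ : ℕ} (C : Tensor n₁ n₂ n₃) : Tensor n₂ n₁ n₃ :=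
  fun k => (C (-k))ᵀ

/-- The matrix trace of the first frontal slice of a tensor with square slices. -/
def trFirst {m n₃ : ℕ} (S : Tensor m m n₃) : ℝ :=
  (S 0).trace

/-- The inner product `⟨C, D⟩ = ∑ k i j, C k i j * D k i j`. -/
def tInner {n₁ n₂ n₃ : ℕ} [NeZero n₃] (C D : Tensor n₁ n₂ n₃) : ℝ :=
  ∑ k : ZMod n₃, ∑ i : Fin n₁, ∑ j : Fin n₂, C k i j * D k i j

/-- The Frobenius norm `‖C‖ = √⟨C, C⟩`. -/
def tNorm {n₁ n₂ n₃ : ℕ} [NeZero n₃] (C : Tensor n₁ n₂ n₃) : ℝ :=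
  Real.sqrt (tInner C C)

/-- The block circulant matrix of a tensor: its `(k, l)` block is `C (k - l)`. -/
def bCirc {n n₃ : ℕ} [NeZero n₃] (C : Tensor n n n₃) :
    Matrix (ZMod n₃ × Fin n) (ZMod n₃ × Fin n) ℝ :=
  fun p q => C (p.1 - q.1) p.2 q.2

/-- `C` is T-symmetric positive definite: `Cᵀ = C` and `bCirc C` is positive definite. -/
def TSymPD {n n₃ : ℕ} [NeZero n₃] (C : Tensor n n n₃) : Prop :=
  tTrans C = C ∧ (bCirc C).PosDef

variable {n l n₃ : ℕ} [NeZero n₃]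

lemma trFirst_tProd (Y Z : Tensor n l n₃) :
    trFirst (tProd (tTrans Y) Z) = tInner Y Z := by
  simp only [trFirst, tProd, tTrans, zero_sub, neg_neg]
  rw [Matrix.trace_sum]
  unfold tInner
  refine Finset.sum_congr rfl fun k _ => ?_
  rw [Matrix.trace]
  simp only [Matrix.diag, Matrix.mul_apply, Matrix.transpose_apply]
  rw [Finset.sum_comm]

lemma tProd_sub (C : Tensor n n n₃) (Y Z : Tensor n l n₃) :
    tProd C (Y - Z) = tProd C Y - tProd C Z := by
  funext k
  simp [tProd, Matrix.mul_sub, Finset.sum_sub_distrib]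

lemma tProd_add (C : Tensor n n n₃) (Y Z : Tensor n l n₃) :
    tProd C (Y + Z) = tProd C Y + tProd C Z := by
  funext k
  simp [tProd, Matrix.mul_add, Finset.sum_add_distrib]

lemma tProd_smul (C : Tensor n n n₃) (t : ℝ) (Y : Tensor n l n₃) :
    tProd C (t • Y) = t • tProd C Y := by
  funext k
  simp [tProd, Matrix.mul_smul, Finset.smul_sum]

lemma tInner_add_left (Y Z W : Tensor n l n₃) :
    tInner (Y + Z) W = tInner Y W + tInner Z W := by
  simp [tInner, add_mul, Finset.sum_add_distrib]

lemma tInner_sub_left (Y Z W : Tensor n l n₃) :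
    tInner (Y - Z) W = tInner Y W - tInner Z W := by
  simp [tInner, sub_mul, Finset.sum_sub_distrib]

lemma tInner_sub_right (Y Z W : Tensor n l n₃) :
    tInner Y (Z - W) = tInner Y Z - tInner Y W := by
  simp [tInner, mul_sub, Finset.sum_sub_distrib]

lemma tInner_add_right (Y Z W : Tensor n l n₃) :
    tInner Y (Z + W) = tInner Y Z + tInner Y W := by
  simp [tInner, mul_add, Finset.sum_add_distrib]

lemma tInner_smul_left (t : ℝ) (Y W : Tensor n l n₃) :
    tInner (t • Y) W = t * tInner Y W := by
  simp [tInner, Finset.mul_sum, mul_assoc]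

lemma tInner_smul_right (t : ℝ) (Y W : Tensor n l n₃) :
    tInner Y (t • W) = t * tInner Y W := by
  simp [tInner, Finset.mul_sum]; ring_nf
  refine Finset.sum_congr rfl fun k _ => Finset.sum_congr rfl fun i _ =>
    Finset.sum_congr rfl fun c _ => by ring

lemma tInner_comm (Y Z : Tensor n l n₃) : tInner Y Z = tInner Z Y := by
  simp [tInner, mul_comm]

lemma sum_rot {α β γ : Type*} [Fintype α] [Fintype β] [Fintype γ] (f : α → β → γ → ℝ) :
    ∑ a, ∑ b, ∑ c, f a b c = ∑ c, ∑ a, ∑ b, f a b c :=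
  (Finset.sum_congr rfl fun _ _ => Finset.sum_comm).trans Finset.sum_comm

lemma tInner_tProd_eq (C : Tensor n n n₃) (Y Z : Tensor n l n₃) :
    tInner Y (tProd C Z) =
      ∑ c : Fin l, (fun p : ZMod n₃ × Fin n => Y p.1 p.2 c) ⬝ᵥ
        (bCirc C *ᵥ fun p : ZMod n₃ × Fin n => Z p.1 p.2 c) := by
  simp only [tInner, tProd, Matrix.sum_apply, Matrix.mul_apply, dotProduct, Matrix.mulVec,
    bCirc, Fintype.sum_prod_type]
  rw [sum_rot fun k i c => Y k i c * ∑ j, ∑ m, C (k - j) i m * Z j m c]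

lemma Q_nonneg {C : Tensor n n n₃} (hC : (bCirc C).PosDef) (Y : Tensor n l n₃) :
    0 ≤ tInner Y (tProd C Y) := by
  rw [tInner_tProd_eq]
  refine Finset.sum_nonneg fun c _ => ?_
  have := hC.posSemidef.dotProduct_mulVec_nonneg (fun p : ZMod n₃ × Fin n => Y p.1 p.2 c)
  simpa using this

lemma B_symm {C : Tensor n n n₃} (h : (bCirc C).IsHermitian) (Y Z : Tensor n l n₃) :
    tInner Y (tProd C Z) = tInner Z (tProd C Y) := by
  have hA : ∀ p q, bCirc C q p = bCirc C p q := fun p q => by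
    conv_lhs => rw [← h]
    simp [Matrix.conjTranspose_apply]
  rw [tInner_tProd_eq, tInner_tProd_eq]
  refine Finset.sum_congr rfl fun c _ => ?_
  simp only [dotProduct, Matrix.mulVec, Finset.mul_sum]
  rw [Finset.sum_comm]
  exact Finset.sum_congr rfl fun p _ => Finset.sum_congr rfl fun q _ => by
    rw [hA p q]; ring

lemma tInner_self_nonneg (V : Tensor n l n₃) : 0 ≤ tInner V V :=
  Finset.sum_nonneg fun _ _ => Finset.sum_nonneg fun _ _ =>
    Finset.sum_nonneg fun _ _ => mul_self_nonneg _

lemma tInner_self_eq_zero {V : Tensor n l n₃} (h : tInner V V = 0) : V = 0 := by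
  funext k
  ext i c
  have h1 := (Finset.sum_eq_zero_iff_of_nonneg (fun _ _ => Finset.sum_nonneg fun _ _ =>
    Finset.sum_nonneg fun _ _ => mul_self_nonneg _)).mp h k (Finset.mem_univ _)
  have h2 := (Finset.sum_eq_zero_iff_of_nonneg (fun _ _ =>
    Finset.sum_nonneg fun _ _ => mul_self_nonneg _)).mp h1 i (Finset.mem_univ _)
  have h3 := (Finset.sum_eq_zero_iff_of_nonneg (fun _ _ => mul_self_nonneg _)).mp h2 c
    (Finset.mem_univ _)
  simpa [mul_self_eq_zero] using h3

theorem stmt_3 (n l n₃ : ℕ) [NeZero n₃] (C : Tensor n n n₃) (hC : TSymPD C)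
    (D X : Tensor n l n₃)
    (f : Tensor n l n₃ → Tensor l l n₃)
    (hf : ∀ Y, f Y = (1 / 2 : ℝ) • tProd (tTrans Y) (tProd C Y) - tProd (tTrans Y) D) :
    tProd C X = D ↔ ∀ Y : Tensor n l n₃, trFirst (f X) ≤ trFirst (f Y) := by
  obtain ⟨hsym, hpd⟩ := hC
  have hHerm : (bCirc C).IsHermitian := hpd.1
  have hg : ∀ Y : Tensor n l n₃, trFirst (f Y) =
      (1/2) * tInner Y (tProd C Y) - tInner Y D := by
    intro Y
    rw [hf Y]
    have e : trFirst ((1/2 : ℝ) • tProd (tTrans Y) (tProd C Y) - tProd (tTrans Y) D)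
        = (1/2 : ℝ) * trFirst (tProd (tTrans Y) (tProd C Y)) - trFirst (tProd (tTrans Y) D) := by
      simp [trFirst, Matrix.trace_smul, Matrix.trace_sub, smul_eq_mul]
    rw [e, trFirst_tProd, trFirst_tProd]
  constructor
  · intro h Y
    rw [hg, hg]
    have key : 0 ≤ tInner (Y - X) (tProd C (Y - X)) := Q_nonneg hpd _
    rw [tProd_sub, tInner_sub_left, tInner_sub_right, tInner_sub_right] at key
    have hBsym := B_symm hHerm Y X
    have hd1 : tInner Y D = tInner Y (tProd C X) := by rw [h]
    have hd2 : tInner X D = tInner X (tProd C X) := by rw [h]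
    linarith
  · intro hmin
    set V : Tensor n l n₃ := tProd C X - D with hV
    set a : ℝ := tInner V V with ha'
    set b : ℝ := tInner V (tProd C V) with hb'
    have ha : ∀ t : ℝ, 0 ≤ t * a + t^2/2 * b := by
      intro t
      have h1 := hmin (X + t • V)
      rw [hg, hg] at h1
      have e1 : tProd C (X + t • V) = tProd C X + t • tProd C V := by
        rw [tProd_add, tProd_smul]
      rw [e1, tInner_add_left, tInner_add_left, tInner_add_right, tInner_add_right,
        tInner_smul_left, tInner_smul_right, tInner_smul_left, tInner_smul_right,
        tInner_smul_left] at h1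
      have hBsym := B_symm hHerm X V
      have hVD : tInner V (tProd C X) - tInner V D = a := by
        rw [ha', hV, tInner_sub_right]
      have key : t * a + t^2/2 * b =
          (1/2 * (tInner X (tProd C X) + t * tInner X (tProd C V) +
            (t * tInner V (tProd C X) + t * (t * tInner V (tProd C V)))) -
          (tInner X D + t * tInner V D)) -
          (1/2 * tInner X (tProd C X) - tInner X D) := by
        rw [← hVD, hBsym, hb']; ring
      linarith [h1, key.ge, key.le]
    have h2 : 0 ≤ a := tInner_self_nonneg V
    have hb : 0 ≤ b := Q_nonneg hpd V
    have haz : a = 0 := by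
      rcases eq_or_lt_of_le hb with hb0 | hb0
      · have h1 := ha (-1)
        nlinarith
      · have h1 := ha (-(a/b))
        have hb0' : b ≠ 0 := ne_of_gt hb0
        have key : -(a/b) * a + (-(a/b))^2/2 * b = -(a^2/(2*b)) := by
          field_simp; ring
        rw [key] at h1
        have h3 : a^2/(2*b) ≤ 0 := by linarith
        have h4 : 0 ≤ a^2/(2*b) := div_nonneg (sq_nonneg a) (by linarith)
        have h5 : a^2 = 0 := by
          have h6 : a^2/(2*b) = 0 := le_antisymm h3 h4
          rcases div_eq_zero_iff.mp h6 with h | h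
          · exact h
          · exact absurd h (by linarith)
        exact pow_eq_zero_iff (by norm_num) |>.mp h5
    have hVz : V = 0 := tInner_self_eq_zero haz
    rwa [hV, sub_eq_zero] at hVz
end
end

section
/- Let C ∈ ℝ^{n×n×n₃} be T-symmetric positive definite, D ∈ ℝ^{n×l×n₃}, and let X_k, R_k, P_k be the iterates of Algorithm 1 from an arbitrary initial tensor X₁ ∈ ℝ^{n×l×n₃}. If P₁,…,P_{k−1} are all nonzero (so that the iterates up to index k are defined), then Tr((P_kᵀ⋆R_k)^{(1)}) = Tr((R_kᵀ⋆R_k)^{(1)}) = ‖R_k‖². -/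
open Matrix Filter Topology

noncomputable section

lemma trFirst_eq {n₁ n₂ n₃ : ℕ} [NeZero n₃] (A B : Tensor n₁ n₂ n₃) :
    trFirst (tProd (tTrans A) B) = tInner A B := by
  unfold trFirst tProd tTrans tInner
  rw [Matrix.trace_sum]
  refine Finset.sum_congr rfl fun j _ => ?_
  simp only [zero_sub, neg_neg]
  simp only [Matrix.trace, Matrix.diag_apply, Matrix.mul_apply, Matrix.transpose_apply]
  exact Finset.sum_comm

lemma tInner_self_nonneg_s6 {n₁ n₂ n₃ : ℕ} [NeZero n₃] (A : Tensor n₁ n₂ n₃) :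
    0 ≤ tInner A A := by
  refine Finset.sum_nonneg fun _ _ => Finset.sum_nonneg fun _ _ =>
    Finset.sum_nonneg fun _ _ => mul_self_nonneg _

lemma tProd_add_s6 {n₁ n₂ l n₃ : ℕ} [NeZero n₃] (C : Tensor n₁ n₂ n₃) (A B : Tensor n₂ l n₃) :
    tProd C (A + B) = tProd C A + tProd C B := by
  funext k
  simp [tProd, Matrix.mul_add, Finset.sum_add_distrib]

lemma tProd_smul_s6 {n₁ n₂ l n₃ : ℕ} [NeZero n₃] (C : Tensor n₁ n₂ n₃) (c : ℝ)
    (A : Tensor n₂ l n₃) : tProd C (c • A) = c • tProd C A := by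
  funext k
  simp [tProd, Matrix.mul_smul, Finset.smul_sum]

lemma tInner_sub_right_s6 {n₁ n₂ n₃ : ℕ} [NeZero n₃] (A B B' : Tensor n₁ n₂ n₃) :
    tInner A (B - B') = tInner A B - tInner A B' := by
  simp [tInner, mul_sub, Finset.sum_sub_distrib]

lemma tInner_smul_right_s6 {n₁ n₂ n₃ : ℕ} [NeZero n₃] (A : Tensor n₁ n₂ n₃) (c : ℝ)
    (B : Tensor n₁ n₂ n₃) : tInner A (c • B) = c * tInner A B := by
  simp [tInner, Finset.mul_sum]
  ring_nf
  refine Finset.sum_congr rfl fun _ _ => Finset.sum_congr rfl fun _ _ =>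
    Finset.sum_congr rfl fun _ _ => by ring

lemma tInner_sub_left_s6 {n₁ n₂ n₃ : ℕ} [NeZero n₃] (A A' B : Tensor n₁ n₂ n₃) :
    tInner (A - A') B = tInner A B - tInner A' B := by
  simp [tInner, sub_mul, Finset.sum_sub_distrib]

lemma tInner_smul_left_s6 {n₁ n₂ n₃ : ℕ} [NeZero n₃] (c : ℝ) (A B : Tensor n₁ n₂ n₃) :
    tInner (c • A) B = c * tInner A B := by
  simp [tInner, Finset.mul_sum]
  refine Finset.sum_congr rfl fun _ _ => Finset.sum_congr rfl fun _ _ =>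
    Finset.sum_congr rfl fun _ _ => by ring

lemma tInner_tProd_pos {n l n₃ : ℕ} [NeZero n₃] (C : Tensor n n n₃)
    (hC : (bCirc C).PosDef) (P : Tensor n l n₃) (hP : P ≠ 0) :
    0 < tInner P (tProd C P) := by
  have key : tInner P (tProd C P) = ∑ j : Fin l,
      (fun p : ZMod n₃ × Fin n => P p.1 p.2 j) ⬝ᵥ
        (bCirc C *ᵥ fun p : ZMod n₃ × Fin n => P p.1 p.2 j) := by
    have e1 : ∀ (f : ZMod n₃ → Fin n → Fin l → ℝ),
        (∑ k : ZMod n₃, ∑ i : Fin n, ∑ j : Fin l, f k i j) =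
          ∑ j : Fin l, ∑ k : ZMod n₃, ∑ i : Fin n, f k i j := fun f =>
      (Finset.sum_congr rfl fun _ _ => Finset.sum_comm).trans
        (Finset.sum_comm)
    unfold tInner tProd bCirc
    rw [e1]
    refine Finset.sum_congr rfl fun j _ => ?_
    simp [dotProduct, Matrix.mulVec, Fintype.sum_prod_type, Matrix.sum_apply,
      Matrix.mul_apply]
  rw [key]
  have hex : ∃ k i j, P k i j ≠ 0 := by
    by_contra h
    push_neg at h
    exact hP (funext fun k => Matrix.ext fun i j => h k i j)
  obtain ⟨k0, i0, j0, h0⟩ := hex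
  refine Finset.sum_pos' (fun j _ => ?_) ⟨j0, Finset.mem_univ _, ?_⟩
  · have := hC.posSemidef.dotProduct_mulVec_nonneg (fun p : ZMod n₃ × Fin n => P p.1 p.2 j)
    simpa using this
  · refine hC.dotProduct_mulVec_pos (x := fun p : ZMod n₃ × Fin n => P p.1 p.2 j0) ?_
    intro h
    exact h0 (congrFun h (k0, i0))

theorem stmt_6 (n l n₃ : ℕ) [NeZero n₃] (C : Tensor n n n₃) (hC : TSymPD C)
    (D : Tensor n l n₃)
    (X R P : ℕ → Tensor n l n₃)
    (hR : ∀ i, 1 ≤ i → R i = D - tProd C (X i))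
    (hP1 : P 1 = R 1)
    (hX : ∀ i, 1 ≤ i → X (i + 1) = X i +
      (trFirst (tProd (tTrans (P i)) (R i)) /
        trFirst (tProd (tTrans (P i)) (tProd C (P i)))) • P i)
    (hP : ∀ i, 1 ≤ i → P (i + 1) = R (i + 1) -
      (trFirst (tProd (tTrans (P i)) (tProd C (R (i + 1)))) /
        trFirst (tProd (tTrans (P i)) (tProd C (P i)))) • P i)
    (k : ℕ) (hk : 1 ≤ k) (hPne : ∀ i, 1 ≤ i → i < k → P i ≠ 0) :
    trFirst (tProd (tTrans (P k)) (R k)) = trFirst (tProd (tTrans (R k)) (R k)) ∧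
    trFirst (tProd (tTrans (R k)) (R k)) = tNorm (R k) ^ 2 := by
  classical
  have hden : ∀ i, 1 ≤ i → i < k → 0 < tInner (P i) (tProd C (P i)) :=
    fun i h1 h2 => tInner_tProd_pos C hC.2 (P i) (hPne i h1 h2)
  have part2 : trFirst (tProd (tTrans (R k)) (R k)) = tNorm (R k) ^ 2 := by
    rw [trFirst_eq, tNorm, Real.sq_sqrt (tInner_self_nonneg_s6 _)]
  refine ⟨?_, part2⟩
  rw [trFirst_eq, trFirst_eq]
  rcases eq_or_lt_of_le hk with h1 | h2
  · rw [← h1, hP1]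
  · obtain ⟨m, rfl⟩ : ∃ m, k = m + 1 := ⟨k - 1, by omega⟩
    have hm1 : 1 ≤ m := by omega
    have hdm : tInner (P m) (tProd C (P m)) ≠ 0 := (hden m hm1 (by omega)).ne'
    have hRm1 : R (m + 1) = R m -
        (tInner (P m) (R m) / tInner (P m) (tProd C (P m))) • tProd C (P m) := by
      rw [hR (m + 1) (by omega), hX m hm1, tProd_add_s6, tProd_smul_s6, trFirst_eq, trFirst_eq,
        hR m hm1]
      abel
    have horth : tInner (P m) (R (m + 1)) = 0 := by
      rw [hRm1, tInner_sub_right_s6, tInner_smul_right_s6,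
        div_mul_cancel₀ _ hdm, sub_self]
    rw [hP m hm1, tInner_sub_left_s6, tInner_smul_left_s6, horth, mul_zero, sub_zero]
end
end
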